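/- Let 1 < p < ∞ and let u, v be positive differentiable functions on Ω with v^p/u^{p-1} well-defined. Then the pointwise Picone inequality |∇u|^{p-2} ∇u · ∇(v^p / u^{p-1}) ≤ |∇v|^p holds; more generally for 1 < r ≤ p, |∇u|^{p-2} ∇u · ∇(v^r/u^{r-1}) ≤ |∇v|^r |∇u|^{p-r}. -/

import Mathlib

open MeasureTheory
open scoped RealInnerProductSpace

noncomputable section

abbrev Euc (N : ℕ) := EuclideanSpace ℝ (Fin N)

lemma picone_scalar {p r a b U V I : ℝ} (hr1 : 1 < r)
    (ha : 0 ≤ a) (hb : 0 ≤ b) (hU : 0 < U) (hV : 0 < V) (hI : |I| ≤ a * b) :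
    a ^ (p - 2) * ((r * V ^ (r - 1) * U ^ (1 - r)) * I
        + ((1 - r) * V ^ r * U ^ (-r)) * (a * a))
      ≤ b ^ r * a ^ (p - r) := by
  rcases eq_or_lt_of_le ha with h0 | ha0
  · have hI0 : I = 0 := by
      have h' : |I| ≤ 0 := by rw [← h0] at hI; simpa using hI
      exact abs_eq_zero.mp (le_antisymm h' (abs_nonneg I))
    rw [← h0, hI0]
    simp only [mul_zero, zero_mul, add_zero, mul_zero]
    positivity
  · have hr0 : (0:ℝ) < r := lt_trans zero_lt_one hr1
    have hr1' : r - 1 ≠ 0 := sub_ne_zero.2 hr1.ne'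
    have hrm1 : (0:ℝ) < r - 1 := sub_pos.2 hr1
    set t : ℝ := (V / U) * a with ht_def
    have ht0 : 0 ≤ t := by positivity
    have hpq : Real.HolderConjugate r (r / (r - 1)) := Real.HolderConjugate.conjExponent hr1
    have hyi := Real.young_inequality_of_nonneg hb (Real.rpow_nonneg ht0 (r - 1)) hpq
    have htr : (t ^ (r - 1)) ^ (r / (r - 1)) = t ^ r := by
      rw [← Real.rpow_mul ht0, show (r - 1) * (r / (r - 1)) = r by field_simp]
    rw [htr] at hyi
    have hyoung : r * (t ^ (r - 1) * b) ≤ b ^ r + (r - 1) * t ^ r := by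
      have h := mul_le_mul_of_nonneg_left hyi hr0.le
      calc r * (t ^ (r - 1) * b) = r * (b * t ^ (r - 1)) := by ring
        _ ≤ r * (b ^ r / r + t ^ r / (r / (r - 1))) := h
        _ = b ^ r + (r - 1) * t ^ r := by field_simp
    have hUr1 : U ^ (1 - r) = (U ^ (r - 1))⁻¹ := by
      rw [show (1 - r) = -(r - 1) by ring, Real.rpow_neg hU.le]
    have hUr2 : U ^ (-r) = (U ^ r)⁻¹ := Real.rpow_neg hU.le r
    have ht1 : t ^ (r - 1) = V ^ (r - 1) * (U ^ (r - 1))⁻¹ * a ^ (r - 1) := by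
      rw [ht_def, Real.mul_rpow (by positivity) ha0.le, Real.div_rpow hV.le hU.le,
        div_eq_mul_inv]
    have ht2 : t ^ r = V ^ r * (U ^ r)⁻¹ * a ^ r := by
      rw [ht_def, Real.mul_rpow (by positivity) ha0.le, Real.div_rpow hV.le hU.le,
        div_eq_mul_inv]
    have hap1 : a ^ (p - 2) * a = a ^ (r - 1) * a ^ (p - r) := by
      rw [show a ^ (p - 2) * a = a ^ ((p - 2) + 1) by
            rw [Real.rpow_add ha0, Real.rpow_one],
        ← Real.rpow_add ha0]
      ring_nf
    have haa : a * a = a ^ (2:ℝ) := by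
      rw [show (2:ℝ) = (1:ℝ) + 1 by norm_num, Real.rpow_add ha0, Real.rpow_one]
    have hap2 : a ^ (p - 2) * (a * a) = a ^ r * a ^ (p - r) := by
      rw [haa, ← Real.rpow_add ha0, ← Real.rpow_add ha0]
      ring_nf
    have key : a ^ (p - 2) * ((r * V ^ (r - 1) * U ^ (1 - r)) * (a * b)
          + ((1 - r) * V ^ r * U ^ (-r)) * (a * a))
        = a ^ (p - r) * (r * (t ^ (r - 1) * b) + (1 - r) * t ^ r) := by
      rw [hUr1, hUr2, ht1, ht2]
      linear_combination (r * V ^ (r - 1) * (U ^ (r - 1))⁻¹ * b) * hap1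
        + ((1 - r) * V ^ r * (U ^ r)⁻¹) * hap2
    have hIle : I ≤ a * b := (abs_le.mp hI).2
    have hc1 : (0:ℝ) ≤ r * V ^ (r - 1) * U ^ (1 - r) := by positivity
    have step1 : a ^ (p - 2) * ((r * V ^ (r - 1) * U ^ (1 - r)) * I
          + ((1 - r) * V ^ r * U ^ (-r)) * (a * a))
        ≤ a ^ (p - 2) * ((r * V ^ (r - 1) * U ^ (1 - r)) * (a * b)
          + ((1 - r) * V ^ r * U ^ (-r)) * (a * a)) := by
      apply mul_le_mul_of_nonneg_left _ (Real.rpow_nonneg ha0.le _)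
      exact add_le_add (mul_le_mul_of_nonneg_left hIle hc1) le_rfl
    refine step1.trans ?_
    rw [key]
    have hbr : r * (t ^ (r - 1) * b) + (1 - r) * t ^ r ≤ b ^ r := by linarith
    calc a ^ (p - r) * (r * (t ^ (r - 1) * b) + (1 - r) * t ^ r)
        ≤ a ^ (p - r) * b ^ r :=
          mul_le_mul_of_nonneg_left hbr (Real.rpow_nonneg ha0.le _)
      _ = b ^ r * a ^ (p - r) := mul_comm _ _

lemma picone_grad_aux {N : ℕ} {u v : Euc N → ℝ} {x : Euc N} (r : ℝ)
    (hu : DifferentiableAt ℝ u x) (hv : DifferentiableAt ℝ v x)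
    (hux : 0 < u x) (hvx : 0 < v x) (hnbd : ∀ᶠ z in nhds x, 0 < u z) :
    HasGradientAt (fun z => v z ^ r / u z ^ (r - 1))
      ((r * v x ^ (r - 1) * u x ^ (1 - r)) • gradient v x
        + ((1 - r) * v x ^ r * u x ^ (-r)) • gradient u x) x := by
  set du := InnerProductSpace.toDual ℝ (Euc N) (gradient u x) with hdu_def
  set dv := InnerProductSpace.toDual ℝ (Euc N) (gradient v x) with hdv_def
  have hdu : HasFDerivAt u du x := hu.hasGradientAt.hasFDerivAt
  have hdv : HasFDerivAt v dv x := hv.hasGradientAt.hasFDerivAt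
  have h1 : HasFDerivAt (fun z => v z ^ r) ((r * v x ^ (r - 1)) • dv) x :=
    hdv.rpow_const (Or.inl hvx.ne')
  have h2 : HasFDerivAt (fun z => u z ^ (1 - r)) (((1 - r) * u x ^ (-r)) • du) x := by
    have h := hdu.rpow_const (p := 1 - r) (Or.inl hux.ne')
    rw [show (1 - r) - 1 = -r by ring] at h
    exact h
  have hmul := h1.mul h2
  have hfd : HasFDerivAt (fun z => v z ^ r * u z ^ (1 - r))
      (InnerProductSpace.toDual ℝ (Euc N) ((r * v x ^ (r - 1) * u x ^ (1 - r)) • gradient v x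
        + ((1 - r) * v x ^ r * u x ^ (-r)) • gradient u x)) x := by
    refine HasFDerivAt.congr_fderiv hmul ?_
    ext y
    simp [InnerProductSpace.toDual_apply_apply, inner_add_left, real_inner_smul_left, hdu_def, hdv_def]
    ring
  have hg := hasGradientAt_iff_hasFDerivAt.mpr hfd
  refine hg.congr_of_eventuallyEq (hnbd.mono fun z hz => ?_)
  show v z ^ r / u z ^ (r - 1) = v z ^ r * u z ^ (1 - r)
  rw [div_eq_mul_inv, ← Real.rpow_neg hz.le, neg_sub]

/-- Generalized Picone inequality: for `1 < p < ∞` and positive differentiable `u, v` on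
an open set `Ω ⊆ ℝ^N`, pointwise `|∇u|^{p-2} ∇u · ∇(v^p/u^{p-1}) ≤ |∇v|^p`, and more
generally for `1 < r ≤ p`, `|∇u|^{p-2} ∇u · ∇(v^r/u^{r-1}) ≤ |∇v|^r |∇u|^{p-r}`. -/
theorem picone_inequality {N : ℕ} (Ω : Set (Euc N)) (hΩ : IsOpen Ω)
    (p : ℝ) (hp1 : 1 < p)
    (u v : Euc N → ℝ)
    (hu : ∀ x ∈ Ω, DifferentiableAt ℝ u x) (hv : ∀ x ∈ Ω, DifferentiableAt ℝ v x)
    (hupos : ∀ x ∈ Ω, 0 < u x) (hvpos : ∀ x ∈ Ω, 0 < v x) :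
    (∀ x ∈ Ω,
      ⟪(‖gradient u x‖ ^ (p - 2) : ℝ) • gradient u x,
        gradient (fun z => v z ^ p / u z ^ (p - 1)) x⟫ ≤ ‖gradient v x‖ ^ p) ∧
    (∀ r : ℝ, 1 < r → r ≤ p → ∀ x ∈ Ω,
      ⟪(‖gradient u x‖ ^ (p - 2) : ℝ) • gradient u x,
        gradient (fun z => v z ^ r / u z ^ (r - 1)) x⟫ ≤
          ‖gradient v x‖ ^ r * ‖gradient u x‖ ^ (p - r)) := by
  have main : ∀ r : ℝ, 1 < r → r ≤ p → ∀ x ∈ Ω,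
      ⟪(‖gradient u x‖ ^ (p - 2) : ℝ) • gradient u x,
        gradient (fun z => v z ^ r / u z ^ (r - 1)) x⟫ ≤
          ‖gradient v x‖ ^ r * ‖gradient u x‖ ^ (p - r) := by
    intro r hr1 hrp x hx
    have hnbd : ∀ᶠ z in nhds x, 0 < u z :=
      Filter.eventually_of_mem (hΩ.mem_nhds hx) fun z hz => hupos z hz
    have hg := picone_grad_aux (u := u) (v := v) (x := x) r (hu x hx) (hv x hx)
      (hupos x hx) (hvpos x hx) hnbd
    rw [hg.gradient]
    rw [inner_add_right, real_inner_smul_left, real_inner_smul_left,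
      real_inner_smul_right, real_inner_smul_right, real_inner_self_eq_norm_mul_norm]
    have := picone_scalar (p := p) (I := ⟪gradient u x, gradient v x⟫) hr1
      (norm_nonneg (gradient u x)) (norm_nonneg (gradient v x))
      (hupos x hx) (hvpos x hx) (abs_real_inner_le_norm _ _)
    calc ‖gradient u x‖ ^ (p - 2) * (r * v x ^ (r - 1) * u x ^ (1 - r) *
            ⟪gradient u x, gradient v x⟫)
          + ‖gradient u x‖ ^ (p - 2) * ((1 - r) * v x ^ r * u x ^ (-r) *
            (‖gradient u x‖ * ‖gradient u x‖))
        = ‖gradient u x‖ ^ (p - 2) * ((r * v x ^ (r - 1) * u x ^ (1 - r)) *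
            ⟪gradient u x, gradient v x⟫
          + ((1 - r) * v x ^ r * u x ^ (-r)) *
            (‖gradient u x‖ * ‖gradient u x‖)) := by ring
      _ ≤ ‖gradient v x‖ ^ r * ‖gradient u x‖ ^ (p - r) := this
  refine ⟨?_, main⟩
  intro x hx
  have h := main p hp1 le_rfl x hx
  rwa [sub_self, Real.rpow_zero, mul_one] at h
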